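/- Let W > 0, V > 0, q > 0, u > 0. The unique p* maximizing g(p) = q·p/(W p + V) − u·p over p ∈ [0,1] is: p* = 1 if q ≥ u(W+V)²/V; p* = (√(Vq/u) − V)/W if uV < q < u(W+V)²/V; and p* = 0 if q ≤ uV. In the middle regime, p* is characterized by the stationarity condition qV/(W p* + V)² = u. -/

import Mathlib

open Set

private lemma key_id (W V q u a b : ℝ) (hA : W * a + V ≠ 0) (hB : W * b + V ≠ 0) :
    (q * a / (W * a + V) - u * a) - (q * b / (W * b + V) - u * b)
      = ((a - b) * (q * V - u * ((W * a + V) * (W * b + V)))) / ((W * a + V) * (W * b + V)) := by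
  have hA' : a * W + V ≠ 0 := by rwa [mul_comm]
  have hB' : b * W + V ≠ 0 := by rwa [mul_comm]
  field_simp
  ring

/-- Per-file KKT solution (Theorem 2): the unique maximizer of
g(p) = q p/(W p + V) − u p over [0,1] is 1, (√(Vq/u) − V)/W, or 0 according to the
popularity thresholds, with stationarity qV/(W p* + V)² = u in the middle regime. -/
theorem stmt_6 (W V q u : ℝ) (hW : 0 < W) (hV : 0 < V) (hq : 0 < q) (hu : 0 < u) :
    (q ≥ u * (W + V) ^ 2 / V →
      IsMaxOn (fun p : ℝ => q * p / (W * p + V) - u * p) (Icc 0 1) 1 ∧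
      ∀ p ∈ Icc (0 : ℝ) 1,
        IsMaxOn (fun p' : ℝ => q * p' / (W * p' + V) - u * p') (Icc 0 1) p → p = 1) ∧
    (u * V < q → q < u * (W + V) ^ 2 / V →
      IsMaxOn (fun p : ℝ => q * p / (W * p + V) - u * p) (Icc 0 1)
        ((Real.sqrt (V * q / u) - V) / W) ∧
      (∀ p ∈ Icc (0 : ℝ) 1,
        IsMaxOn (fun p' : ℝ => q * p' / (W * p' + V) - u * p') (Icc 0 1) p →
          p = (Real.sqrt (V * q / u) - V) / W) ∧
      q * V / (W * ((Real.sqrt (V * q / u) - V) / W) + V) ^ 2 = u) ∧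
    (q ≤ u * V →
      IsMaxOn (fun p : ℝ => q * p / (W * p + V) - u * p) (Icc 0 1) 0 ∧
      ∀ p ∈ Icc (0 : ℝ) 1,
        IsMaxOn (fun p' : ℝ => q * p' / (W * p' + V) - u * p') (Icc 0 1) p → p = 0) := by
  have hposx : ∀ x ∈ Icc (0 : ℝ) 1, 0 < W * x + V := by
    intro x hx
    nlinarith [hx.1, hx.2]
  refine ⟨?_, ?_, ?_⟩
  · -- case p* = 1
    intro h
    have hq1 : u * (W + V) ^ 2 ≤ q * V := by
      rw [ge_iff_le, div_le_iff₀ hV] at h; linarith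
    have h1mem : (1 : ℝ) ∈ Icc (0 : ℝ) 1 := ⟨zero_le_one, le_refl 1⟩
    have hmax : IsMaxOn (fun p : ℝ => q * p / (W * p + V) - u * p) (Icc 0 1) 1 := by
      rw [isMaxOn_iff]
      intro x hx
      have hxp := hposx x hx
      have h1p := hposx 1 h1mem
      have hkey := key_id W V q u 1 x (ne_of_gt h1p) (ne_of_gt hxp)
      have hnum : 0 ≤ (1 - x) * (q * V - u * ((W * 1 + V) * (W * x + V))) := by
        have hle : W * x + V ≤ W + V := by nlinarith [hx.2]
        have h2 := mul_le_mul_of_nonneg_left hle (by positivity : (0:ℝ) ≤ u * (W + V))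
        have hfac : 0 ≤ q * V - u * ((W * 1 + V) * (W * x + V)) := by nlinarith
        exact mul_nonneg (by linarith [hx.2]) hfac
      nlinarith [div_nonneg hnum (le_of_lt (mul_pos h1p hxp))]
    refine ⟨hmax, fun p hp hpmax => ?_⟩
    have hpp := hposx p hp
    have h1p := hposx 1 h1mem
    have heq : (q * 1 / (W * 1 + V) - u * 1) - (q * p / (W * p + V) - u * p) = 0 := by
      have h1 := isMaxOn_iff.mp hmax p hp
      have h2 := isMaxOn_iff.mp hpmax 1 h1mem
      linarith
    rw [key_id W V q u 1 p (ne_of_gt h1p) (ne_of_gt hpp)] at heq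
    have hnum : (1 - p) * (q * V - u * ((W * 1 + V) * (W * p + V))) = 0 := by
      have hd : (W * 1 + V) * (W * p + V) ≠ 0 := ne_of_gt (mul_pos h1p hpp)
      exact (div_eq_zero_iff.mp heq).resolve_right hd
    by_contra hne
    have hlt : p < 1 := lt_of_le_of_ne hp.2 hne
    nlinarith [hnum, mul_le_mul_of_nonneg_left hq1 (by linarith : (0:ℝ) ≤ 1 - p),
      mul_pos (mul_pos (mul_pos hu (show (0:ℝ) < W + V by linarith)) hW)
        (mul_pos (sub_pos.mpr hlt) (sub_pos.mpr hlt))]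
  · -- middle case
    intro hl hr
    set r : ℝ := Real.sqrt (V * q / u) with hrdef
    set s : ℝ := (r - V) / W with hsdef
    have hrnn : 0 ≤ r := Real.sqrt_nonneg _
    have hr2 : r ^ 2 = V * q / u := Real.sq_sqrt (by positivity)
    have hqV : q * V = u * r ^ 2 := by
      rw [hr2]; field_simp
    have hrV : V < r := by
      have h2 : V ^ 2 < r ^ 2 := by
        rw [hr2]; rw [lt_div_iff₀ hu]; nlinarith
      nlinarith
    have hrWV : r < W + V := by
      have h2 : r ^ 2 < (W + V) ^ 2 := by
        rw [hr2]; rw [div_lt_iff₀ hu]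
        have := (lt_div_iff₀ hV).mp hr
        nlinarith
      nlinarith
    have hWs : W * s + V = r := by
      rw [hsdef]; field_simp; ring
    have hsmem : s ∈ Icc (0 : ℝ) 1 := by
      constructor
      · rw [hsdef]
        have h0 : 0 < r - V := by linarith
        exact (div_pos h0 hW).le
      · rw [hsdef, div_le_one hW]; linarith
    have hsp : 0 < W * s + V := hposx s hsmem
    have hqV' : q * V = u * (W * s + V) ^ 2 := by rw [hWs]; exact hqV
    have hmax : IsMaxOn (fun p : ℝ => q * p / (W * p + V) - u * p) (Icc 0 1) s := by
      rw [isMaxOn_iff]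
      intro x hx
      have hxp := hposx x hx
      have hkey := key_id W V q u s x (ne_of_gt hsp) (ne_of_gt hxp)
      have hid : (s - x) * (q * V - u * ((W * s + V) * (W * x + V)))
          = u * (W * s + V) * W * (s - x) ^ 2 := by
        linear_combination (s - x) * hqV'
      have hnum : 0 ≤ (s - x) * (q * V - u * ((W * s + V) * (W * x + V))) := by
        rw [hid]; positivity
      nlinarith [div_nonneg hnum (le_of_lt (mul_pos hsp hxp))]
    refine ⟨hmax, fun p hp hpmax => ?_, ?_⟩
    · have hpp := hposx p hp
      have heq : (q * s / (W * s + V) - u * s) - (q * p / (W * p + V) - u * p) = 0 := by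
        have h1 := isMaxOn_iff.mp hmax p hp
        have h2 := isMaxOn_iff.mp hpmax s hsmem
        linarith
      rw [key_id W V q u s p (ne_of_gt hsp) (ne_of_gt hpp)] at heq
      have hnum : (s - p) * (q * V - u * ((W * s + V) * (W * p + V))) = 0 := by
        have hd : (W * s + V) * (W * p + V) ≠ 0 := ne_of_gt (mul_pos hsp hpp)
        exact (div_eq_zero_iff.mp heq).resolve_right hd
      have hid : (s - p) * (q * V - u * ((W * s + V) * (W * p + V)))
          = u * (W * s + V) * W * (s - p) ^ 2 := by
        linear_combination (s - p) * hqV'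
      rw [hid] at hnum
      have hsq : (s - p) ^ 2 = 0 := by
        have hpos : 0 < u * (W * s + V) * W := by positivity
        have := mul_eq_zero.mp hnum
        rcases this with h | h
        · exact absurd h (ne_of_gt hpos)
        · exact h
      have := pow_eq_zero_iff (n := 2) (by norm_num) |>.mp hsq
      linarith [sub_eq_zero.mp this]
    · rw [hWs, hr2]
      field_simp
  · -- case p* = 0
    intro h
    have h0mem : (0 : ℝ) ∈ Icc (0 : ℝ) 1 := ⟨le_refl 0, zero_le_one⟩
    have h0p : 0 < W * 0 + V := hposx 0 h0mem
    have hmax : IsMaxOn (fun p : ℝ => q * p / (W * p + V) - u * p) (Icc 0 1) 0 := by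
      rw [isMaxOn_iff]
      intro x hx
      have hxp := hposx x hx
      have hkey := key_id W V q u 0 x (ne_of_gt h0p) (ne_of_gt hxp)
      have hnum : 0 ≤ (0 - x) * (q * V - u * ((W * 0 + V) * (W * x + V))) := by
        have hfac : q * V - u * ((W * 0 + V) * (W * x + V)) ≤ 0 := by
          nlinarith [mul_nonneg (mul_nonneg (mul_nonneg hu.le hV.le) hW.le) hx.1]
        nlinarith [mul_nonneg hx.1 (neg_nonneg.mpr hfac)]
      nlinarith [div_nonneg hnum (le_of_lt (mul_pos h0p hxp))]
    refine ⟨hmax, fun p hp hpmax => ?_⟩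
    have hpp := hposx p hp
    have heq : (q * 0 / (W * 0 + V) - u * 0) - (q * p / (W * p + V) - u * p) = 0 := by
      have h1 := isMaxOn_iff.mp hmax p hp
      have h2 := isMaxOn_iff.mp hpmax 0 h0mem
      linarith
    rw [key_id W V q u 0 p (ne_of_gt h0p) (ne_of_gt hpp)] at heq
    have hnum : (0 - p) * (q * V - u * ((W * 0 + V) * (W * p + V))) = 0 := by
      have hd : (W * 0 + V) * (W * p + V) ≠ 0 := ne_of_gt (mul_pos h0p hpp)
      exact (div_eq_zero_iff.mp heq).resolve_right hd
    by_contra hne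
    have hlt : 0 < p := lt_of_le_of_ne hp.1 (Ne.symm hne)
    have hqVle : q * V ≤ u * V * V := by nlinarith
    nlinarith [hnum, mul_le_mul_of_nonneg_left hqVle hlt.le,
      mul_pos (mul_pos (mul_pos hu hV) hW) (mul_pos hlt hlt)]
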